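/- arXiv:2202.13886 — 2 statements merged into one kernel-verified Lean document; each statement's English description precedes it below -/
import Mathlib

section
/- Let (Ω, F, P) be a probability space, G a sub-σ-algebra of F, 1 < p < ∞ with conjugate exponent q, and X an ℝⁿ-valued random vector in L^p. Then the essential supremum of E[|X|^p | G]^{1/p} equals the smallest constant C such that ‖E[X · Y | G]‖_{L^q} ≤ C ‖Y‖_{L^q} holds for all ℝⁿ-valued random vectors Y ∈ L^q. -/
open MeasureTheory Filter
open scoped ENNReal RealInnerProductSpace


private lemma young_inf {p q : ℝ} (hpq : Real.HolderConjugate p q) {A B c : ℝ}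
    (hA : 0 ≤ A) (hB : 0 ≤ B)
    (h : ∀ r : ℚ, 0 < r → c ≤ (r:ℝ) ^ p * A / p + (r:ℝ) ^ (-q) * B / q) :
    c ≤ A ^ (1/p) * B ^ (1/q) := by
  have hp := hpq.pos
  have hq := hpq.symm.pos
  suffices H : ∀ ε : ℝ, 0 < ε → c ≤ (A+ε)^(1/p) * (B+ε)^(1/q) by
    have h1 : ContinuousAt (fun x : ℝ => x ^ (1/p)) A :=
      Real.continuousAt_rpow_const _ _ (Or.inr (by positivity))
    have h2 : ContinuousAt (fun x : ℝ => x ^ (1/q)) B :=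
      Real.continuousAt_rpow_const _ _ (Or.inr (by positivity))
    have hAt : Tendsto (fun ε : ℝ => A + ε) (nhdsWithin 0 (Set.Ioi 0)) (nhds A) := by
      have : Tendsto (fun ε : ℝ => A + ε) (nhds 0) (nhds (A + 0)) :=
        (continuous_const.add continuous_id).tendsto 0
      simpa using this.mono_left nhdsWithin_le_nhds
    have hBt : Tendsto (fun ε : ℝ => B + ε) (nhdsWithin 0 (Set.Ioi 0)) (nhds B) := by
      have : Tendsto (fun ε : ℝ => B + ε) (nhds 0) (nhds (B + 0)) :=
        (continuous_const.add continuous_id).tendsto 0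
      simpa using this.mono_left nhdsWithin_le_nhds
    have hten : Tendsto (fun ε : ℝ => (A+ε)^(1/p) * (B+ε)^(1/q))
        (nhdsWithin 0 (Set.Ioi 0)) (nhds (A^(1/p) * B^(1/q))) :=
      ((h1.tendsto.comp hAt).mul (h2.tendsto.comp hBt))
    exact ge_of_tendsto hten (eventually_nhdsWithin_of_forall fun ε hε => H ε hε)
  intro ε hε
  set A' := A + ε with hA'def
  set B' := B + ε with hB'def
  have hA' : 0 < A' := by positivity
  have hB' : 0 < B' := by positivity
  by_contra hc
  push_neg at hc
  set l := (B'/A') ^ (1/(p+q)) with hldef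
  have hl : 0 < l := by positivity
  have hdiv : (0:ℝ) < B'/A' := by positivity
  have hpq_add : 0 < p + q := by positivity
  have hmul : p * q = p + q := hpq.mul_eq_add
  have e1 : l ^ p = B' ^ (1/q) / A' ^ (1/q) := by
    rw [hldef, ← Real.rpow_mul hdiv.le]
    have : 1/(p+q) * p = 1/q := by field_simp; linarith
    rw [this, Real.div_rpow hB'.le hA'.le]
  have e2 : l ^ (-q) = A' ^ (1/p) / B' ^ (1/p) := by
    rw [hldef, ← Real.rpow_mul hdiv.le]
    have : 1/(p+q) * (-q) = -(1/p) := by field_simp; linarith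
    rw [this, Real.rpow_neg hdiv.le, Real.div_rpow hB'.le hA'.le, inv_div]
  have hsum : 1/p + 1/q = 1 := by rw [one_div, one_div, hpq.inv_add_inv_eq_one]
  have eA : A' ^ (1/p) * A' ^ (1/q) = A' := by
    rw [← Real.rpow_add hA', hsum, Real.rpow_one]
  have eB : B' ^ (1/p) * B' ^ (1/q) = B' := by
    rw [← Real.rpow_add hB', hsum, Real.rpow_one]
  have hApos : 0 < A' ^ (1/q) := Real.rpow_pos_of_pos hA' _
  have hBpos : 0 < B' ^ (1/p) := Real.rpow_pos_of_pos hB' _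
  have t1 : B' ^ (1/q) / A' ^ (1/q) * A' = A' ^ (1/p) * B' ^ (1/q) := by
    rw [div_mul_eq_mul_div, div_eq_iff hApos.ne']
    linear_combination (-B' ^ (1/q)) * eA
  have t2 : A' ^ (1/p) / B' ^ (1/p) * B' = A' ^ (1/p) * B' ^ (1/q) := by
    rw [div_mul_eq_mul_div, div_eq_iff hBpos.ne']
    linear_combination (-A' ^ (1/p)) * eB
  have hFl : l ^ p * A' / p + l ^ (-q) * B' / q = A' ^ (1/p) * B' ^ (1/q) := by
    rw [e1, e2, t1, t2]
    field_simp
    linear_combination -hmul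
  have hFc : ContinuousOn (fun x : ℝ => x ^ p * A'/p + x ^ (-q) * B'/q) (Set.Ioi 0) := by
    intro x hx
    exact ((((Real.continuousAt_rpow_const x p (Or.inl (ne_of_gt hx))).mul
      continuousAt_const).div_const p).add (((Real.continuousAt_rpow_const x (-q)
      (Or.inl (ne_of_gt hx))).mul continuousAt_const).div_const q)).continuousWithinAt
  have hSopen : IsOpen (Set.Ioi (0:ℝ) ∩ (fun x : ℝ => x ^ p * A'/p + x ^ (-q) * B'/q) ⁻¹' Set.Iio c) :=
    hFc.isOpen_inter_preimage isOpen_Ioi isOpen_Iio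
  obtain ⟨r, hr⟩ := Rat.denseRange_cast.exists_mem_open hSopen
    ⟨l, hl, by simp only [Set.mem_preimage, Set.mem_Iio]; rw [hFl]; exact hc⟩
  have hrR : (0:ℝ) < (r:ℝ) := hr.1
  have hrpos : (0:ℚ) < r := by exact_mod_cast hrR
  have hh := h r hrpos
  have hmono : (r:ℝ)^p*A/p + (r:ℝ)^(-q)*B/q ≤ (r:ℝ)^p*A'/p + (r:ℝ)^(-q)*B'/q := by
    have h1 : (0:ℝ) < (r:ℝ) := hr.1
    have h2 : 0 ≤ (r:ℝ)^p := by positivity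
    have h3 : 0 ≤ (r:ℝ)^(-q) := by positivity
    have : A ≤ A' := by simp [hA'def]; linarith
    have : B ≤ B' := by simp [hB'def]; linarith
    gcongr <;> simp [hA'def, hB'def] <;> linarith
  have := hr.2
  simp only [Set.mem_preimage, Set.mem_Iio] at this
  linarith


section Part1
variable {Ω : Type*} {m0 : MeasurableSpace Ω} (μ : Measure Ω) [IsProbabilityMeasure μ]
  (G : MeasurableSpace Ω) (hG : G ≤ m0) (n : ℕ)
  (p q : ℝ) (hpq : Real.HolderConjugate p q)
  (X : Ω → EuclideanSpace ℝ (Fin n))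
  (hX : MemLp X (ENNReal.ofReal p) μ)

include hG hpq hX in
theorem part1 (Y : Ω → EuclideanSpace ℝ (Fin n)) (hY : MemLp Y (ENNReal.ofReal q) μ)
    (hM : essSup (fun ω => ENNReal.ofReal ((μ[fun ω => ‖X ω‖ ^ p | G]) ω)) μ ≠ ∞) :
    eLpNorm (μ[fun ω => ⟪X ω, Y ω⟫ | G]) (ENNReal.ofReal q) μ ≤
      (essSup (fun ω => ENNReal.ofReal ((μ[fun ω => ‖X ω‖ ^ p | G]) ω)) μ) ^ (1/p) *
        eLpNorm Y (ENNReal.ofReal q) μ := by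
  have hp0 : 0 < p := hpq.pos
  have hq0 : 0 < q := hpq.symm.pos
  set h : Ω → ℝ := μ[fun ω => ‖X ω‖ ^ p | G] with hdef
  set h2 : Ω → ℝ := μ[fun ω => ‖Y ω‖ ^ q | G] with h2def
  set M : ℝ≥0∞ := essSup (fun ω => ENNReal.ofReal (h ω)) μ with Mdef
  set f : Ω → ℝ := μ[fun ω => ⟪X ω, Y ω⟫ | G] with fdef
  -- basic integrability
  have intX : Integrable (fun ω => ‖X ω‖ ^ p) μ := by
    have := hX.integrable_norm_rpow (by simp [hp0]) (by simp)
    simpa [ENNReal.toReal_ofReal hp0.le] using this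
  have intY : Integrable (fun ω => ‖Y ω‖ ^ q) μ := by
    have := hY.integrable_norm_rpow (by simp [hq0]) (by simp)
    simpa [ENNReal.toReal_ofReal hq0.le] using this
  have aesmXY : AEStronglyMeasurable (m := m0) (fun ω => ⟪X ω, Y ω⟫) μ :=
    hX.aestronglyMeasurable.inner hY.aestronglyMeasurable
  have intXY : Integrable (fun ω => ⟪X ω, Y ω⟫) μ := by
    refine Integrable.mono' ((intX.div_const p).add (intY.div_const q)) aesmXY ?_
    filter_upwards with ω
    calc ‖⟪X ω, Y ω⟫‖ = |⟪X ω, Y ω⟫| := rfl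
      _ ≤ ‖X ω‖ * ‖Y ω‖ := abs_real_inner_le_norm _ _
      _ ≤ ‖X ω‖ ^ p / p + ‖Y ω‖ ^ q / q :=
          Real.young_inequality_of_nonneg (norm_nonneg _) (norm_nonneg _) hpq
  -- nonnegativity of conditional expectations
  have h2nn : 0 ≤ᵐ[μ] h2 := condExp_nonneg (Filter.Eventually.of_forall fun ω =>
    Real.rpow_nonneg (norm_nonneg _) _)
  set M' : ℝ := M.toReal with M'def
  have hM'0 : 0 ≤ M' := ENNReal.toReal_nonneg
  have hhle : ∀ᵐ ω ∂μ, h ω ≤ M' := by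
    have h1 : ∀ᵐ ω ∂μ, ENNReal.ofReal (h ω) ≤ M := ENNReal.ae_le_essSup _
    have h0 : 0 ≤ᵐ[μ] h := condExp_nonneg (Filter.Eventually.of_forall fun ω =>
      Real.rpow_nonneg (norm_nonneg _) _)
    filter_upwards [h1, h0] with ω h1ω h0ω
    calc h ω = (ENNReal.ofReal (h ω)).toReal := (ENNReal.toReal_ofReal h0ω).symm
      _ ≤ M' := ENNReal.toReal_mono hM h1ω
  -- the key pointwise bound for each positive rational
  have hrat : ∀ r : ℚ, 0 < r → ∀ᵐ ω ∂μ,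
      |f ω| ≤ (r:ℝ) ^ p * M' / p + (r:ℝ) ^ (-q) * h2 ω / q := by
    intro r hr
    have hrR : (0:ℝ) < (r:ℝ) := by exact_mod_cast hr
    set g : Ω → ℝ := fun ω => (r:ℝ) ^ p * ‖X ω‖ ^ p / p + (r:ℝ) ^ (-q) * ‖Y ω‖ ^ q / q with gdef
    have intg : Integrable g μ := by
      exact ((intX.const_mul _).div_const p).add ((intY.const_mul _).div_const q)
    have hptwise : ∀ ω, |⟪X ω, Y ω⟫| ≤ g ω := by
      intro ω
      have := Real.young_inequality_of_nonneg
        (mul_nonneg hrR.le (norm_nonneg (X ω))) (by positivity :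
          (0:ℝ) ≤ ‖Y ω‖ / (r:ℝ)) hpq
      calc |⟪X ω, Y ω⟫| ≤ ‖X ω‖ * ‖Y ω‖ := abs_real_inner_le_norm _ _
        _ = ((r:ℝ) * ‖X ω‖) * (‖Y ω‖ / (r:ℝ)) := by field_simp
        _ ≤ ((r:ℝ) * ‖X ω‖) ^ p / p + (‖Y ω‖ / (r:ℝ)) ^ q / q := this
        _ = g ω := by
            rw [Real.mul_rpow hrR.le (norm_nonneg _), Real.div_rpow (norm_nonneg _) hrR.le,
              gdef]
            rw [Real.rpow_neg hrR.le]
            field_simp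
    -- conditional expectation of g
    have hcondg : μ[g|G] =ᵐ[μ] fun ω => (r:ℝ) ^ p * h ω / p + (r:ℝ) ^ (-q) * h2 ω / q := by
      have e1 : μ[g|G] =ᵐ[μ]
          μ[fun ω => ((r:ℝ) ^ p / p) * ‖X ω‖ ^ p|G] + μ[fun ω => ((r:ℝ) ^ (-q) / q) * ‖Y ω‖ ^ q|G] := by
        have : g = (fun ω => ((r:ℝ) ^ p / p) * ‖X ω‖ ^ p) + (fun ω => ((r:ℝ) ^ (-q) / q) * ‖Y ω‖ ^ q) := by
          funext ω; simp [gdef]; ring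
        rw [this]
        exact condExp_add ((intX.const_mul _)) ((intY.const_mul _)) G
      have e2 : μ[fun ω => ((r:ℝ) ^ p / p) * ‖X ω‖ ^ p|G] =ᵐ[μ] fun ω => ((r:ℝ) ^ p / p) * h ω := by
        simpa [Pi.smul_def, smul_eq_mul] using condExp_smul (m := G) (μ := μ) ((r:ℝ) ^ p / p) (fun ω => ‖X ω‖ ^ p)
      have e3 : μ[fun ω => ((r:ℝ) ^ (-q) / q) * ‖Y ω‖ ^ q|G] =ᵐ[μ] fun ω => ((r:ℝ) ^ (-q) / q) * h2 ω := by
        simpa [Pi.smul_def, smul_eq_mul] using condExp_smul (m := G) (μ := μ) ((r:ℝ) ^ (-q) / q) (fun ω => ‖Y ω‖ ^ q)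
      filter_upwards [e1, e2, e3] with ω e1ω e2ω e3ω
      simp only [Pi.add_apply] at e1ω
      rw [e1ω, e2ω, e3ω]; ring
    have hub : f ≤ᵐ[μ] μ[g|G] :=
      condExp_mono intXY intg (Filter.Eventually.of_forall fun ω =>
        (le_abs_self _).trans (hptwise ω))
    have hlb : -f ≤ᵐ[μ] μ[g|G] := by
      have : μ[fun ω => -⟪X ω, Y ω⟫|G] ≤ᵐ[μ] μ[g|G] :=
        condExp_mono intXY.neg intg (Filter.Eventually.of_forall fun ω =>
          (neg_le_abs _).trans (hptwise ω))
      have hneg : μ[fun ω => -⟪X ω, Y ω⟫|G] =ᵐ[μ] -f := by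
        simpa [fdef, Pi.neg_def] using condExp_neg (μ := μ) (m := G) (fun ω => ⟪X ω, Y ω⟫)
      filter_upwards [this, hneg] with ω h1 h2
      rw [← h2]; exact h1
    have hh2 : ∀ᵐ ω ∂μ, (r:ℝ) ^ p * h ω / p + (r:ℝ) ^ (-q) * h2 ω / q ≤
        (r:ℝ) ^ p * M' / p + (r:ℝ) ^ (-q) * h2 ω / q := by
      filter_upwards [hhle] with ω hω
      have : (0:ℝ) ≤ (r:ℝ) ^ p := by positivity
      gcongr
    filter_upwards [hub, hlb, hcondg, hh2] with ω h1 h2' h3 h4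
    have : |f ω| ≤ (μ[g|G]) ω := abs_le.mpr ⟨neg_le.mp (by simpa using h2'), h1⟩
    calc |f ω| ≤ (μ[g|G]) ω := this
      _ = (r:ℝ) ^ p * h ω / p + (r:ℝ) ^ (-q) * h2 ω / q := h3
      _ ≤ _ := h4
  -- combine over all rationals
  have hae : ∀ᵐ ω ∂μ, |f ω| ≤ M' ^ (1/p) * (h2 ω) ^ (1/q) := by
    have hall : ∀ᵐ ω ∂μ, ∀ r : ℚ, 0 < r →
        |f ω| ≤ (r:ℝ) ^ p * M' / p + (r:ℝ) ^ (-q) * h2 ω / q := by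
      rw [ae_all_iff]
      intro r
      by_cases hr : 0 < r
      · filter_upwards [hrat r hr] with ω hω; intro _; exact hω
      · filter_upwards with ω hr'; exact absurd hr' hr
    filter_upwards [hall, h2nn] with ω hω h2ω
    exact young_inf hpq hM'0 h2ω hω
  -- conclude via eLpNorm computations
  have hqe0 : (ENNReal.ofReal q) ≠ 0 := by simp [hq0]
  have hqet : (ENNReal.ofReal q) ≠ ∞ := ENNReal.ofReal_ne_top
  have hqtoReal : (ENNReal.ofReal q).toReal = q := ENNReal.toReal_ofReal hq0.le
  have step1 : eLpNorm f (ENNReal.ofReal q) μ ≤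
      eLpNorm (fun ω => M' ^ (1/p) * (h2 ω) ^ (1/q)) (ENNReal.ofReal q) μ := by
    refine eLpNorm_mono_ae ?_
    filter_upwards [hae] with ω hω
    rw [Real.norm_eq_abs, Real.norm_eq_abs]
    exact hω.trans (le_abs_self _)
  have step2 : eLpNorm (fun ω => M' ^ (1/p) * (h2 ω) ^ (1/q)) (ENNReal.ofReal q) μ =
      ENNReal.ofReal (M' ^ (1/p)) * eLpNorm (fun ω => (h2 ω) ^ (1/q)) (ENNReal.ofReal q) μ := by
    have heq : (fun ω => M' ^ (1/p) * (h2 ω) ^ (1/q))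
        = (M' ^ (1/p)) • (fun ω => (h2 ω) ^ (1/q)) := rfl
    rw [heq, eLpNorm_const_smul, ← Real.enorm_eq_ofReal (by positivity : (0:ℝ) ≤ M' ^ (1/p))]
  have step3 : eLpNorm (fun ω => (h2 ω) ^ (1/q)) (ENNReal.ofReal q) μ =
      eLpNorm Y (ENNReal.ofReal q) μ := by
    rw [eLpNorm_eq_lintegral_rpow_enorm_toReal hqe0 hqet, eLpNorm_eq_lintegral_rpow_enorm_toReal hqe0 hqet,
      hqtoReal]
    congr 1
    have e1 : ∫⁻ ω, (‖(h2 ω) ^ (1/q)‖₊ : ℝ≥0∞) ^ q ∂μ = ∫⁻ ω, ENNReal.ofReal (h2 ω) ∂μ := by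
      refine lintegral_congr_ae ?_
      filter_upwards [h2nn] with ω hω
      rw [← enorm_eq_nnnorm, Real.enorm_eq_ofReal (Real.rpow_nonneg hω _),
        ENNReal.ofReal_rpow_of_nonneg (Real.rpow_nonneg hω _) hq0.le,
        ← Real.rpow_mul hω, one_div_mul_cancel hq0.ne', Real.rpow_one]
    have e2 : ∫⁻ ω, (‖Y ω‖₊ : ℝ≥0∞) ^ q ∂μ = ∫⁻ ω, ENNReal.ofReal (‖Y ω‖ ^ q) ∂μ := by
      refine lintegral_congr fun ω => ?_
      rw [← enorm_eq_nnnorm, ← ofReal_norm, ENNReal.ofReal_rpow_of_nonneg (norm_nonneg _) hq0.le]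
    simp only [enorm_eq_nnnorm]
    rw [e1, e2, ← ofReal_integral_eq_lintegral_ofReal integrable_condExp h2nn,
      ← ofReal_integral_eq_lintegral_ofReal intY
        (Filter.Eventually.of_forall fun ω => Real.rpow_nonneg (norm_nonneg _) _),
      integral_condExp hG (f := fun ω => ‖Y ω‖ ^ q)]
  have step4 : ENNReal.ofReal (M' ^ (1/p)) = M ^ (1/p) := by
    rw [← ENNReal.ofReal_rpow_of_nonneg hM'0 (by positivity), ENNReal.ofReal_toReal hM]
  calc eLpNorm f (ENNReal.ofReal q) μ
      ≤ ENNReal.ofReal (M' ^ (1/p)) * eLpNorm (fun ω => (h2 ω) ^ (1/q)) (ENNReal.ofReal q) μ :=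
        step1.trans_eq step2
    _ = M ^ (1/p) * eLpNorm Y (ENNReal.ofReal q) μ := by rw [step3, step4]


end Part1
section Part2
variable {Ω : Type*} {m0 : MeasurableSpace Ω} (μ : Measure Ω) [IsProbabilityMeasure μ]
  (G : MeasurableSpace Ω) (hG : G ≤ m0) (n : ℕ)
  (p q : ℝ) (hpq : Real.HolderConjugate p q)
  (X : Ω → EuclideanSpace ℝ (Fin n))
  (hX : MemLp X (ENNReal.ofReal p) μ)

include hG hpq hX in
theorem part2 (C : ℝ≥0∞)
    (hC : ∀ Y : Ω → EuclideanSpace ℝ (Fin n), MemLp Y (ENNReal.ofReal q) μ →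
      eLpNorm (μ[fun ω => ⟪X ω, Y ω⟫ | G]) (ENNReal.ofReal q) μ ≤
        C * eLpNorm Y (ENNReal.ofReal q) μ) :
    (essSup (fun ω => ENNReal.ofReal ((μ[fun ω => ‖X ω‖ ^ p | G]) ω)) μ) ^ (1/p) ≤ C := by
  classical
  have hp0 : 0 < p := hpq.pos
  have hq0 : 0 < q := hpq.symm.pos
  have hp1 : 1 < p := hpq.lt
  have hq1 : 1 < q := hpq.symm.lt
  set h : Ω → ℝ := μ[fun ω => ‖X ω‖ ^ p | G] with hdef
  set M : ℝ≥0∞ := essSup (fun ω => ENNReal.ofReal (h ω)) μ with Mdef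
  have intX : Integrable (fun ω => ‖X ω‖ ^ p) μ := by
    have := hX.integrable_norm_rpow (by simp [hp0]) (by simp)
    simpa [ENNReal.toReal_ofReal hp0.le] using this
  have hqe0 : (ENNReal.ofReal q) ≠ 0 := by simp [hq0]
  have hqet : (ENNReal.ofReal q) ≠ ∞ := ENNReal.ofReal_ne_top
  have hqtoReal : (ENNReal.ofReal q).toReal = q := ENNReal.toReal_ofReal hq0.le
  -- reduce to M ≤ C ^ p
  suffices hMC : M ≤ C ^ p by
    calc M ^ (1/p) ≤ (C ^ p) ^ (1/p) := ENNReal.rpow_le_rpow hMC (by positivity)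
      _ = C := by
          rw [← ENNReal.rpow_mul, mul_one_div_cancel hp0.ne', ENNReal.rpow_one]
  by_contra hMC
  rw [not_le] at hMC
  obtain ⟨c, hc1, hc2⟩ := exists_between hMC
  have hcne : c ≠ ∞ := hc2.ne_top
  have hc0 : 0 < c := (zero_le).trans_lt hc1
  set t : ℝ := c.toReal with tdef
  have ht0 : 0 < t := ENNReal.toReal_pos hc0.ne' hcne
  have hofReal_t : ENNReal.ofReal t = c := ENNReal.ofReal_toReal hcne
  -- the set where h > t
  have hmeas_h : StronglyMeasurable[G] h := stronglyMeasurable_condExp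
  set A : Set Ω := {ω | t < h ω} with Adef
  have hmG : MeasurableSet[G] A := measurableSet_lt measurable_const hmeas_h.measurable
  have hmA : MeasurableSet[m0] A := hG _ hmG
  have hμA : μ A ≠ 0 := by
    intro h0
    have hae : ∀ᵐ ω ∂μ, h ω ≤ t := by
      rw [ae_iff]
      have : {a | ¬ h a ≤ t} = A := by ext a; simp [Adef, not_le]
      rw [this]; exact h0
    have : M ≤ ENNReal.ofReal t :=
      essSup_le_of_ae_le _ (hae.mono fun ω hω => ENNReal.ofReal_le_ofReal hω)
    rw [hofReal_t] at this
    exact absurd (hc2.trans_le this) (lt_irrefl _)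
  -- the test function Y
  set F : EuclideanSpace ℝ (Fin n) → EuclideanSpace ℝ (Fin n) :=
    fun x => if x = 0 then 0 else (‖x‖ ^ (p-2)) • x with Fdef
  have hF_meas : Measurable F := by
    refine Measurable.ite ?_ measurable_const ?_
    · exact measurableSet_eq
    · exact (measurable_norm.pow measurable_const).smul measurable_id
  set Y : Ω → EuclideanSpace ℝ (Fin n) := A.indicator (fun ω => F (X ω)) with Ydef
  -- pointwise identities
  have hFnorm : ∀ x : EuclideanSpace ℝ (Fin n), ‖F x‖ = ‖x‖ ^ (p-1) := by
    intro x
    by_cases hx : x = 0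
    · simp [Fdef, hx, Real.zero_rpow (by linarith : p - 1 ≠ 0)]
    · have hxn : 0 < ‖x‖ := norm_pos_iff.mpr hx
      rw [Fdef]
      simp only [if_neg hx]
      rw [norm_smul, Real.norm_eq_abs, abs_of_nonneg (Real.rpow_nonneg hxn.le _)]
      calc ‖x‖ ^ (p-2) * ‖x‖ = ‖x‖ ^ (p-2) * ‖x‖ ^ (1:ℝ) := by rw [Real.rpow_one]
        _ = ‖x‖ ^ (p-1) := by rw [← Real.rpow_add hxn]; congr 1; ring
  have hFinner : ∀ x : EuclideanSpace ℝ (Fin n), ⟪x, F x⟫ = ‖x‖ ^ p := by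
    intro x
    by_cases hx : x = 0
    · simp [Fdef, hx, Real.zero_rpow hp0.ne']
    · have hxn : 0 < ‖x‖ := norm_pos_iff.mpr hx
      rw [Fdef]
      simp only [if_neg hx]
      rw [real_inner_smul_right, real_inner_self_eq_norm_mul_norm]
      have h2 : ‖x‖ * ‖x‖ = ‖x‖ ^ (2:ℝ) := by
        rw [show (2:ℝ) = ((2:ℕ):ℝ) by norm_num, Real.rpow_natCast]; ring
      rw [h2, ← Real.rpow_add hxn]; congr 1; ring
  have hinnerY : (fun ω => ⟪X ω, Y ω⟫) = A.indicator (fun ω => ‖X ω‖ ^ p) := by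
    funext ω
    by_cases hω : ω ∈ A
    · rw [Ydef]
      simp only [Set.indicator_of_mem hω]
      exact hFinner (X ω)
    · rw [Ydef]
      simp [Set.indicator_of_notMem hω]
  have hYnorm : ∀ ω, ‖Y ω‖ = A.indicator (fun ω => ‖X ω‖ ^ (p-1)) ω := by
    intro ω
    by_cases hω : ω ∈ A
    · rw [Ydef]; simp only [Set.indicator_of_mem hω]; exact hFnorm (X ω)
    · rw [Ydef]; simp [Set.indicator_of_notMem hω]
  -- Y is in L^q
  have hY_aesm : AEStronglyMeasurable (m := m0) Y μ :=
    ((hF_meas.comp_aemeasurable hX.aestronglyMeasurable.aemeasurable).aestronglyMeasurable).indicator hmA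
  have hgmem : MemLp (fun ω => ‖X ω‖ ^ (p-1)) (ENNReal.ofReal q) μ := by
    refine ⟨((hX.aestronglyMeasurable.norm.aemeasurable.pow aemeasurable_const).aestronglyMeasurable), ?_⟩
    rw [eLpNorm_norm_rpow X (by linarith : 0 < p - 1)]
    have : ENNReal.ofReal q * ENNReal.ofReal (p-1) = ENNReal.ofReal p := by
      rw [← ENNReal.ofReal_mul hq0.le]
      congr 1
      linear_combination hpq.sub_one_mul_conj
    rw [this]
    exact ENNReal.rpow_lt_top_of_nonneg (by linarith) hX.2.ne
  have hYmem : MemLp Y (ENNReal.ofReal q) μ := by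
    refine hgmem.of_le hY_aesm ?_
    filter_upwards with ω
    rw [hYnorm ω, Real.norm_eq_abs, abs_of_nonneg (Real.rpow_nonneg (norm_nonneg _) _)]
    by_cases hω : ω ∈ A
    · simp [Set.indicator_of_mem hω]
    · simp only [Set.indicator_of_notMem hω]
      exact Real.rpow_nonneg (norm_nonneg _) _
  -- key integrals
  have hintA : ∫ ω in A, h ω ∂μ = ∫ ω in A, ‖X ω‖ ^ p ∂μ := setIntegral_condExp hG intX hmG
  have hnn_h : 0 ≤ᵐ[μ] h := condExp_nonneg (Filter.Eventually.of_forall fun ω =>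
    Real.rpow_nonneg (norm_nonneg _) _)
  set I : ℝ≥0∞ := ∫⁻ ω in A, ENNReal.ofReal (h ω) ∂μ with Idef
  have hI_eq : I = ENNReal.ofReal (∫ ω in A, h ω ∂μ) :=
    (ofReal_integral_eq_lintegral_ofReal integrable_condExp.restrict
      (ae_restrict_of_ae hnn_h)).symm
  have hI_ne_top : I ≠ ∞ := by rw [hI_eq]; exact ENNReal.ofReal_ne_top
  have hI_ne_zero : I ≠ 0 := by
    have hlb : ENNReal.ofReal t * μ A ≤ I := by
      rw [← setLIntegral_const A (ENNReal.ofReal t)]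
      refine lintegral_mono_ae ?_
      filter_upwards [ae_restrict_mem hmA] with ω hω
      exact ENNReal.ofReal_le_ofReal (le_of_lt hω)
    intro h0
    rw [h0, le_zero_iff, mul_eq_zero] at hlb
    rcases hlb with h1 | h2
    · exact absurd h1 (by simp [ht0])
    · exact hμA h2
  -- snorm of Y
  have hsnormY : eLpNorm Y (ENNReal.ofReal q) μ = I ^ (1/q) := by
    rw [eLpNorm_eq_lintegral_rpow_enorm_toReal hqe0 hqet, hqtoReal]
    congr 1
    have e2 : ∀ ω, (‖Y ω‖₊ : ℝ≥0∞) ^ q = A.indicator (fun ω => ENNReal.ofReal (‖X ω‖ ^ p)) ω := by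
      intro ω
      rw [← enorm_eq_nnnorm, ← ofReal_norm, ENNReal.ofReal_rpow_of_nonneg (norm_nonneg _) hq0.le]
      by_cases hω : ω ∈ A
      · rw [Set.indicator_of_mem hω]
        congr 1
        rw [hYnorm ω, Set.indicator_of_mem hω, ← Real.rpow_mul (norm_nonneg _)]
        congr 1
        linear_combination hpq.sub_one_mul_conj
      · rw [Set.indicator_of_notMem hω]
        rw [hYnorm ω, Set.indicator_of_notMem hω]
        simp [Real.zero_rpow hq0.ne']
    calc ∫⁻ ω, (‖Y ω‖₊ : ℝ≥0∞) ^ q ∂μ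
        = ∫⁻ ω, A.indicator (fun ω => ENNReal.ofReal (‖X ω‖ ^ p)) ω ∂μ :=
          lintegral_congr fun ω => e2 ω
      _ = ∫⁻ ω in A, ENNReal.ofReal (‖X ω‖ ^ p) ∂μ := lintegral_indicator hmA _
      _ = ENNReal.ofReal (∫ ω in A, ‖X ω‖ ^ p ∂μ) :=
          (ofReal_integral_eq_lintegral_ofReal intX.restrict
            (ae_restrict_of_ae (Filter.Eventually.of_forall fun ω =>
              Real.rpow_nonneg (norm_nonneg _) _))).symm
      _ = ENNReal.ofReal (∫ ω in A, h ω ∂μ) := by rw [hintA]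
      _ = I := hI_eq.symm
  -- snorm of conditional expectation from below
  have hcond : μ[fun ω => ⟪X ω, Y ω⟫ | G] =ᵐ[μ] A.indicator h := by
    rw [hinnerY]
    exact condExp_indicator intX hmG
  have hlow : (ENNReal.ofReal t ^ (q-1) * I) ^ (1/q) ≤
      eLpNorm (μ[fun ω => ⟪X ω, Y ω⟫ | G]) (ENNReal.ofReal q) μ := by
    rw [eLpNorm_congr_ae hcond, eLpNorm_eq_lintegral_rpow_enorm_toReal hqe0 hqet, hqtoReal]
    refine ENNReal.rpow_le_rpow ?_ (by positivity)
    have hconst : ENNReal.ofReal t ^ (q-1) * I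
        = ∫⁻ ω in A, ENNReal.ofReal t ^ (q-1) * ENNReal.ofReal (h ω) ∂μ :=
      (lintegral_const_mul' _ _
        (ENNReal.rpow_ne_top_of_nonneg (by linarith) ENNReal.ofReal_ne_top)).symm
    rw [hconst, ← lintegral_indicator hmA _]
    refine lintegral_mono fun ω => ?_
    by_cases hω : ω ∈ A
    · rw [Set.indicator_of_mem hω]
      have hht : t < h ω := hω
      have hh0 : (0:ℝ) < h ω := ht0.trans hht
      have hne0 : ENNReal.ofReal (h ω) ≠ 0 := by simp [hh0]
      calc ENNReal.ofReal t ^ (q-1) * ENNReal.ofReal (h ω)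
          ≤ ENNReal.ofReal (h ω) ^ (q-1) * ENNReal.ofReal (h ω) :=
            mul_le_mul_left (ENNReal.rpow_le_rpow
              (ENNReal.ofReal_le_ofReal hht.le) (by linarith)) _
      _ = ENNReal.ofReal (h ω) ^ (q-1) * ENNReal.ofReal (h ω) ^ (1:ℝ) := by
            rw [ENNReal.rpow_one]
      _ = ENNReal.ofReal (h ω) ^ (q-1+1) :=
            (ENNReal.rpow_add _ _ hne0 ENNReal.ofReal_ne_top).symm
      _ = ENNReal.ofReal (h ω) ^ q := by norm_num
      _ = (‖A.indicator h ω‖₊ : ℝ≥0∞) ^ q := by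
            rw [Set.indicator_of_mem hω, ← enorm_eq_nnnorm, ← ofReal_norm, Real.norm_eq_abs,
              abs_of_nonneg hh0.le]
    · rw [Set.indicator_of_notMem hω]
      exact zero_le
  -- combine
  have happ := hC Y hYmem
  rw [hsnormY] at happ
  have hchain : (ENNReal.ofReal t ^ (q-1) * I) ^ (1/q) ≤ C * I ^ (1/q) := hlow.trans happ
  have h1 : ENNReal.ofReal t ^ (q-1) * I ≤ C ^ q * I := by
    have := ENNReal.rpow_le_rpow hchain hq0.le
    rwa [← ENNReal.rpow_mul, one_div_mul_cancel hq0.ne', ENNReal.rpow_one,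
      ENNReal.mul_rpow_of_nonneg _ _ hq0.le, ← ENNReal.rpow_mul,
      one_div_mul_cancel hq0.ne', ENNReal.rpow_one] at this
  have h2 : ENNReal.ofReal t ^ (q-1) ≤ C ^ q :=
    (ENNReal.mul_le_mul_iff_left hI_ne_zero hI_ne_top).mp h1
  have h3 : ENNReal.ofReal t ≤ C ^ p := by
    have := ENNReal.rpow_le_rpow h2 (by positivity : (0:ℝ) ≤ p/q)
    rwa [← ENNReal.rpow_mul, ← ENNReal.rpow_mul,
      show (q-1)*(p/q) = 1 by field_simp; linear_combination hpq.mul_eq_add,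
      show q*(p/q) = p by field_simp, ENNReal.rpow_one] at this
  rw [hofReal_t] at h3
  exact absurd h3 (not_le.mpr hc1)

end Part2

/-- **Conditional duality lemma, case `1 < p < ∞`.**
The essential supremum of `E[|X|^p | G]^{1/p}` is the least constant `C` such that
`‖E[X · Y | G]‖_{L^q} ≤ C ‖Y‖_{L^q}` for all `ℝⁿ`-valued `Y ∈ L^q`. -/
theorem stmt0 {Ω : Type*} {m0 : MeasurableSpace Ω} (μ : Measure Ω) [IsProbabilityMeasure μ]
    (G : MeasurableSpace Ω) (hG : G ≤ m0) (n : ℕ)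
    (p q : ℝ) (hpq : Real.HolderConjugate p q)
    (X : Ω → EuclideanSpace ℝ (Fin n))
    (hX : MemLp X (ENNReal.ofReal p) μ) :
    IsLeast
      {C : ℝ≥0∞ |
        ∀ Y : Ω → EuclideanSpace ℝ (Fin n), MemLp Y (ENNReal.ofReal q) μ →
          eLpNorm (μ[fun ω => ⟪X ω, Y ω⟫ | G]) (ENNReal.ofReal q) μ ≤
            C * eLpNorm Y (ENNReal.ofReal q) μ}
      ((essSup (fun ω => ENNReal.ofReal ((μ[fun ω => ‖X ω‖ ^ p | G]) ω)) μ) ^ (1 / p)) := by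
  have hp0 : 0 < p := hpq.pos
  have hq0 : 0 < q := hpq.symm.pos
  constructor
  · intro Y hY
    by_cases hM : essSup (fun ω => ENNReal.ofReal ((μ[fun ω => ‖X ω‖ ^ p | G]) ω)) μ = ∞
    · by_cases hY0 : eLpNorm Y (ENNReal.ofReal q) μ = 0
      · have hYae : Y =ᵐ[μ] 0 := (eLpNorm_eq_zero_iff hY.1 (by simp [hq0])).mp hY0
        have hinner0 : (fun ω => ⟪X ω, Y ω⟫) =ᵐ[μ] (0 : Ω → ℝ) := by
          filter_upwards [hYae] with ω hω
          simp [hω]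
        have : μ[fun ω => ⟪X ω, Y ω⟫ | G] =ᵐ[μ] (0 : Ω → ℝ) :=
          (condExp_congr_ae hinner0).trans (by rw [condExp_zero])
        rw [eLpNorm_congr_ae this, eLpNorm_zero]
        exact zero_le
      · rw [hM, ENNReal.top_rpow_of_pos (by positivity), ENNReal.top_mul hY0]
        exact le_top
    · exact part1 μ G hG n p q hpq X hX Y hY hM
  · intro C hC
    exact part2 μ G hG n p q hpq X hX C hC
end

section
/- Let (Ω, F, P) be a probability space, G a sub-σ-algebra, 1 < p < ∞ with conjugate q, and X an ℝⁿ-valued random vector in L^p. If C satisfies ‖E[X · Y | G]‖_{L^q} ≤ C ‖Y‖_{L^q} for all Y ∈ L^q(Ω; ℝⁿ), then for every a > 0 with P[E[|X|^p | G] > a] > 0 one has a ≤ C^p; consequently E[|X|^p | G] ≤ C^p almost surely. -/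
open MeasureTheory Filter
open scoped ENNReal RealInnerProductSpace

/-- **Conditional duality lemma, lower bound, `1 < p < ∞`.**
If `‖E[X · Y | G]‖_{L^q} ≤ C ‖Y‖_{L^q}` for all `Y ∈ L^q(Ω; ℝⁿ)`, then for every `a > 0`
with `P[E[|X|^p | G] > a] > 0` one has `a ≤ C^p`; consequently `E[|X|^p | G] ≤ C^p` a.s. -/
theorem stmt2 {Ω : Type*} {m0 : MeasurableSpace Ω} (μ : Measure Ω) [IsProbabilityMeasure μ]
    (G : MeasurableSpace Ω) (hG : G ≤ m0) (n : ℕ)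
    (p q : ℝ) (hpq : Real.HolderConjugate p q)
    (X : Ω → EuclideanSpace ℝ (Fin n)) (hX : MemLp X (ENNReal.ofReal p) μ)
    (C : ℝ) (hC0 : 0 ≤ C)
    (hC : ∀ Y : Ω → EuclideanSpace ℝ (Fin n), MemLp Y (ENNReal.ofReal q) μ →
      eLpNorm (μ[fun ω => ⟪X ω, Y ω⟫ | G]) (ENNReal.ofReal q) μ ≤
        ENNReal.ofReal C * eLpNorm Y (ENNReal.ofReal q) μ) :
    (∀ a : ℝ, 0 < a → μ {ω | a < (μ[fun ω => ‖X ω‖ ^ p | G]) ω} ≠ 0 → a ≤ C ^ p) ∧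
      ∀ᵐ ω ∂μ, (μ[fun ω => ‖X ω‖ ^ p | G]) ω ≤ C ^ p := by
  letI : MeasurableSpace Ω := m0
  have hp1 : 1 < p := hpq.lt
  have hp0 : 0 < p := hpq.pos
  have hq1 : 1 < q := hpq.symm.lt
  have hq0 : 0 < q := hpq.symm.pos
  have hqE0 : ENNReal.ofReal q ≠ 0 := by simp only [ne_eq, ENNReal.ofReal_eq_zero, not_le]; linarith
  have hqEtop : ENNReal.ofReal q ≠ ∞ := ENNReal.ofReal_ne_top
  set h : Ω → ℝ := fun ω => ‖X ω‖ ^ p with hh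
  have hhnn : ∀ ω, 0 ≤ h ω := fun ω => Real.rpow_nonneg (norm_nonneg _) p
  have hint : Integrable h μ := by
    have := hX.integrable_norm_rpow (by simp [ENNReal.ofReal_eq_zero]; linarith)
      ENNReal.ofReal_ne_top
    simpa [ENNReal.toReal_ofReal hp0.le] using this
  set f := μ[h|G] with hf
  have hf_nonneg : 0 ≤ᵐ[μ] f := condExp_nonneg (ae_of_all _ hhnn)
  have hXp : ∀ ω, (‖X ω‖₊ : ℝ≥0∞) ^ p = ENNReal.ofReal (h ω) := fun ω => by
    rw [← enorm_eq_nnnorm, ← ofReal_norm, ENNReal.ofReal_rpow_of_nonneg (norm_nonneg _) hp0.le]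
  have key : ∀ a : ℝ, 0 < a → μ {ω | a < f ω} ≠ 0 → a ≤ C ^ p := by
    intro a ha hμ
    set S := {ω | a < f ω} with hS
    have hSmG : MeasurableSet[G] S :=
      measurableSet_lt measurable_const stronglyMeasurable_condExp.measurable
    have hSm : MeasurableSet[m0] S := hG _ hSmG
    set g : Ω → EuclideanSpace ℝ (Fin n) := fun ω => ‖X ω‖ ^ (p - 2) • X ω with hg
    set Y : Ω → EuclideanSpace ℝ (Fin n) := S.indicator g with hY
    have hYaesm : AEStronglyMeasurable Y μ := by
      have h1 : Measurable fun x : ℝ => x ^ (p - 2) := by measurability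
      exact (((h1.comp_aemeasurable hX.1.norm.aemeasurable).aestronglyMeasurable).smul hX.1).indicator hSm
    -- norm of g
    have hgnorm : ∀ ω, ‖g ω‖ = ‖X ω‖ ^ (p - 1) := by
      intro ω
      rcases eq_or_ne (X ω) 0 with h0 | h0
      · simp [hg, h0, Real.zero_rpow (by intro hc; linarith : p - 1 ≠ 0)]
      · have hn : (0:ℝ) < ‖X ω‖ := norm_pos_iff.2 h0
        rw [hg, norm_smul, Real.norm_eq_abs, abs_of_nonneg (Real.rpow_nonneg (norm_nonneg _) _)]
        nth_rewrite 2 [← Real.rpow_one ‖X ω‖]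
        rw [← Real.rpow_add hn]
        congr 1
        ring
    -- inner product
    have hinner : (fun ω => ⟪X ω, Y ω⟫) = S.indicator h := by
      funext ω
      by_cases hω : ω ∈ S
      · rw [hY, Set.indicator_of_mem hω, Set.indicator_of_mem hω, hg, real_inner_smul_right,
          real_inner_self_eq_norm_mul_norm]
        rcases eq_or_ne (X ω) 0 with h0 | h0
        · simp [hh, h0, Real.zero_rpow hp0.ne']
        · have hn : (0:ℝ) < ‖X ω‖ := norm_pos_iff.2 h0
          rw [hh]
          nth_rewrite 2 [← Real.rpow_one ‖X ω‖]
          nth_rewrite 3 [← Real.rpow_one ‖X ω‖]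
          rw [← mul_assoc, ← Real.rpow_add hn, ← Real.rpow_add hn]
          congr 1
          ring
      · simp [hY, Set.indicator_of_notMem hω]
    -- lintegral of ‖Y‖^q
    set B : ℝ≥0∞ := ∫⁻ ω in S, ENNReal.ofReal (h ω) ∂μ with hB
    have hYlint : ∫⁻ ω, (‖Y ω‖₊ : ℝ≥0∞) ^ q ∂μ = B := by
      have : ∀ ω, (‖Y ω‖₊ : ℝ≥0∞) ^ q = S.indicator (fun ω => ENNReal.ofReal (h ω)) ω := by
        intro ω
        by_cases hω : ω ∈ S
        · rw [hY, Set.indicator_of_mem hω, Set.indicator_of_mem hω, ← enorm_eq_nnnorm, ← ofReal_norm,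
            ENNReal.ofReal_rpow_of_nonneg (norm_nonneg _) hq0.le, hgnorm,
            ← Real.rpow_mul (norm_nonneg _), hpq.sub_one_mul_conj]
        · simp [hY, Set.indicator_of_notMem hω, ENNReal.zero_rpow_of_pos hq0]
      simp_rw [this]
      rw [lintegral_indicator hSm]
    have hBtop : B ≠ ∞ := by
      refine ne_of_lt (lt_of_le_of_lt (setLIntegral_le_lintegral S _) ?_)
      have := hint.2
      rw [hasFiniteIntegral_iff_norm] at this
      simpa [Real.norm_eq_abs, abs_of_nonneg (hhnn _)] using this
    -- B as an integral
    have hBeq : B = ENNReal.ofReal (∫ ω in S, h ω ∂μ) := by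
      rw [ofReal_integral_eq_lintegral_ofReal (hint.restrict) (ae_restrict_of_ae (ae_of_all _ hhnn))]
    have hSf : ∫ ω in S, f ω ∂μ = ∫ ω in S, h ω ∂μ := setIntegral_condExp hG hint hSmG
    have hμStop : μ S ≠ ∞ := measure_ne_top μ S
    have hSfpos : 0 < ∫ ω in S, f ω ∂μ := by
      have h1 : a * (μ S).toReal ≤ ∫ ω in S, f ω ∂μ :=
        setIntegral_ge_of_const_le_real hSm hμStop (fun x hx => le_of_lt hx)
          integrable_condExp.integrableOn
      have h2 : 0 < (μ S).toReal := ENNReal.toReal_pos hμ hμStop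
      nlinarith
    have hB0 : B ≠ 0 := by
      rw [hBeq, ← hSf]
      simpa [ENNReal.ofReal_eq_zero, not_le] using hSfpos
    -- MemLp Y
    have hYsnorm : eLpNorm Y (ENNReal.ofReal q) μ = B ^ (1 / q) := by
      rw [eLpNorm_eq_lintegral_rpow_enorm_toReal hqE0 hqEtop, ENNReal.toReal_ofReal hq0.le, ← hYlint]
      rfl
    have hYmem : MemLp Y (ENNReal.ofReal q) μ := by
      refine ⟨hYaesm, ?_⟩
      rw [hYsnorm]
      exact ENNReal.rpow_lt_top_of_nonneg (by positivity) hBtop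
    -- conditional expectation equality
    have hcond : μ[fun ω => ⟪X ω, Y ω⟫|G] =ᵐ[μ] S.indicator f := by
      rw [hinner]
      exact condExp_indicator hint hSmG
    -- lower bound on lhs lintegral
    have hIf : ∫⁻ ω in S, ENNReal.ofReal (f ω) ∂μ = B := by
      rw [hBeq, ← hSf, ofReal_integral_eq_lintegral_ofReal integrable_condExp.restrict
        (ae_restrict_of_ae hf_nonneg)]
    have hlow : ENNReal.ofReal a ^ (q - 1) * B ≤
        ∫⁻ ω, (‖S.indicator f ω‖₊ : ℝ≥0∞) ^ q ∂μ := by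
      have heq : ∀ ω, (‖S.indicator f ω‖₊ : ℝ≥0∞) ^ q =
          S.indicator (fun ω => ENNReal.ofReal (f ω) ^ q) ω := by
        intro ω
        by_cases hω : ω ∈ S
        · rw [Set.indicator_of_mem hω, Set.indicator_of_mem hω, ← enorm_eq_nnnorm, ← ofReal_norm,
            Real.norm_of_nonneg (le_of_lt (lt_trans ha hω))]
        · simp [Set.indicator_of_notMem hω, ENNReal.zero_rpow_of_pos hq0]
      simp_rw [heq]
      rw [lintegral_indicator hSm]
      calc ENNReal.ofReal a ^ (q - 1) * B
          = ∫⁻ ω in S, ENNReal.ofReal a ^ (q - 1) * ENNReal.ofReal (f ω) ∂μ := by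
            rw [lintegral_const_mul' _ _ (by
              exact ENNReal.rpow_ne_top_of_nonneg (by linarith) ENNReal.ofReal_ne_top), hIf]
        _ ≤ ∫⁻ ω in S, ENNReal.ofReal (f ω) ^ q ∂μ := by
            refine setLIntegral_mono ?_ ?_
            · have hfm : Measurable f := (stronglyMeasurable_condExp.mono hG).measurable
              exact hfm.ennreal_ofReal.pow_const q
            · intro ω hω
              have hfa : a < f ω := hω
              have hfω0 : (0:ℝ) < f ω := lt_trans ha hfa
              have h1 : ENNReal.ofReal (f ω) ≠ 0 := by
                simp [ENNReal.ofReal_eq_zero, not_le]; linarith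
              calc ENNReal.ofReal a ^ (q - 1) * ENNReal.ofReal (f ω)
                  ≤ ENNReal.ofReal (f ω) ^ (q - 1) * ENNReal.ofReal (f ω) :=
                    mul_le_mul_left
                      (ENNReal.rpow_le_rpow (ENNReal.ofReal_le_ofReal hfa.le) (by linarith)) _
                _ = ENNReal.ofReal (f ω) ^ q := by
                    nth_rewrite 2 [← ENNReal.rpow_one (ENNReal.ofReal (f ω))]
                    rw [← ENNReal.rpow_add _ _ h1 ENNReal.ofReal_ne_top]
                    norm_num
    -- use hC
    have hmain := hC Y hYmem
    rw [hYsnorm, eLpNorm_congr_ae hcond, eLpNorm_eq_lintegral_rpow_enorm_toReal hqE0 hqEtop,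
      ENNReal.toReal_ofReal hq0.le] at hmain
    have hfinal : (ENNReal.ofReal a ^ (q - 1) * B) ^ (1 / q) ≤
        (ENNReal.ofReal C ^ q * B) ^ (1 / q) := by
      calc (ENNReal.ofReal a ^ (q - 1) * B) ^ (1 / q)
          ≤ (∫⁻ ω, (‖S.indicator f ω‖₊ : ℝ≥0∞) ^ q ∂μ) ^ (1 / q) := by
            gcongr
        _ ≤ ENNReal.ofReal C * B ^ (1 / q) := hmain
        _ = (ENNReal.ofReal C ^ q * B) ^ (1 / q) := by
            rw [ENNReal.mul_rpow_of_nonneg _ _ (by positivity), ← ENNReal.rpow_mul,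
              mul_one_div_cancel hq0.ne', ENNReal.rpow_one]
    rw [ENNReal.rpow_le_rpow_iff (by positivity : (0:ℝ) < 1 / q)] at hfinal
    rw [ENNReal.mul_le_mul_iff_left hB0 hBtop] at hfinal
    have hfinal2 := ENNReal.rpow_le_rpow hfinal (le_of_lt (by positivity : (0:ℝ) < p / q))
    rw [← ENNReal.rpow_mul, ← ENNReal.rpow_mul] at hfinal2
    have he1 : (q - 1) * (p / q) = 1 := by
      have := hpq.symm.sub_one_mul_conj
      field_simp
      nlinarith
    have he2 : q * (p / q) = p := by field_simp
    rw [he1, he2, ENNReal.rpow_one,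
      ENNReal.ofReal_rpow_of_nonneg hC0 hp0.le] at hfinal2
    rwa [ENNReal.ofReal_le_ofReal_iff (Real.rpow_nonneg hC0 p)] at hfinal2
  refine ⟨key, ?_⟩
  have hnull : ∀ k : ℕ, μ {ω | C ^ p + 1 / (k + 1) < f ω} = 0 := by
    intro k
    by_contra hk
    have hpos : (0:ℝ) < 1 / ((k:ℝ) + 1) := by positivity
    have := key (C ^ p + 1 / (k + 1))
      (add_pos_of_nonneg_of_pos (Real.rpow_nonneg hC0 p) hpos) hk
    linarith
  have hzero : μ {ω | C ^ p < f ω} = 0 := by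
    refine measure_mono_null ?_ (measure_iUnion_null fun k : ℕ => hnull k)
    intro ω hω
    simp only [Set.mem_setOf_eq] at hω
    obtain ⟨k, hk⟩ := exists_nat_one_div_lt (K := ℝ) (sub_pos.2 hω)
    exact Set.mem_iUnion.2 ⟨k, by simp only [Set.mem_setOf_eq]; linarith⟩
  rw [ae_iff]
  simpa [not_le] using hzero
end
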